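/- Fix a prime p and let (α, δ) ∈ ℂ_p × (ℚ ∪ {∞}), where ℂ_p is the completion of the algebraic closure of ℚ_p with valuation ring O_p and maximal ideal M_p. Let O_{p,α,δ} be the valuation ring on ℂ_p(X) of the monomial valuation v_{p,α,δ} (with O_{p,α,∞} = {φ : φ(α) ∈ O_p}), with maximal ideal M_{p,α,δ}. Then M_{p,α,δ} ∩ (O_{p,α,δ} ∩ ℂ_p[X]) = Int(B̄_p(α,δ), M_p) := {f ∈ ℂ_p[X] : f(B̄_p(α,δ)) ⊆ M_p}, where B̄_p(α,δ) = {x ∈ ℂ_p : v_p(x − α) ≥ δ}. -/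

import Mathlib

open scoped NNReal

/-- The monomial (Gauss-type) value attached to a pair `(α, d)` (multiplicative
notation: `d = p^{-δ}` corresponds to the additive radius `δ ∈ ℚ`, and `d = 0`
corresponds to `δ = ∞`, in which case `monVal v α 0 f = v (f(α))`). -/
noncomputable def monVal {L Γ₀ : Type*} [Field L] [LinearOrderedCommGroupWithZero Γ₀]
    (u : Valuation L Γ₀) (α : L) (d : Γ₀) (f : Polynomial L) : Γ₀ :=
  letI : Bot Γ₀ := ⟨0⟩
  letI : OrderBot Γ₀ := { bot_le := fun _ => zero_le' }
  (f.comp (Polynomial.X + Polynomial.C α)).support.sup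
    fun i => u ((f.comp (Polynomial.X + Polynomial.C α)).coeff i) * d ^ i

open Polynomial

namespace Stmt17Aux

variable {F : Type*} [Field F] (v : Valuation F ℝ≥0)

lemma natCast_le_one (n : ℕ) : v (n : F) ≤ 1 := by
  induction n with
  | zero => simp
  | succ n ih =>
    push_cast
    refine le_trans (v.map_add _ _) ?_
    simp [ih]

lemma exists_nat_val_one (N : ℕ) : ∃ m : ℕ, N ≤ m ∧ v (m : F) = 1 := by
  by_cases h1 : v ((N + 1 : ℕ) : F) = 1
  · exact ⟨N + 1, by omega, h1⟩
  · have hlt : v ((N + 1 : ℕ) : F) < 1 := lt_of_le_of_ne (natCast_le_one v _) h1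
    refine ⟨N + 2, by omega, le_antisymm (natCast_le_one v _) ?_⟩
    have hsub : ((N + 2 : ℕ) : F) - ((N + 1 : ℕ) : F) = 1 := by push_cast; ring
    have h2 : (1 : ℝ≥0) ≤ max (v ((N + 2 : ℕ) : F)) (v ((N + 1 : ℕ) : F)) := by
      have := v.map_sub ((N + 2 : ℕ) : F) ((N + 1 : ℕ) : F)
      rw [hsub, v.map_one] at this
      exact this
    rcases le_max_iff.mp h2 with h | h
    · exact h
    · exact absurd h (not_le.mpr hlt)

lemma val_eq_one_of_pow {m : ℕ} (hm : m ≠ 0) {ζ : F} (hz : ζ ^ m = 1) : v ζ = 1 := by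
  have h : (v ζ) ^ m = 1 ^ m := by rw [← map_pow, hz, map_one, one_pow]
  exact (pow_left_inj₀ zero_le zero_le hm).mp h

lemma rootsOfUnity_sep {m : ℕ} (hm : v ((m : ℕ) : F) = 1) {ζ ζ' : F}
    (hz : ζ ^ m = 1) (hz' : ζ' ^ m = 1) (hne : ζ ≠ ζ') : 1 ≤ v (ζ - ζ') := by
  have hm0 : m ≠ 0 := by rintro rfl; simp at hm
  have hvz : v ζ = 1 := val_eq_one_of_pow v hm0 hz
  have hvz' : v ζ' = 1 := val_eq_one_of_pow v hm0 hz'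
  have hz'0 : ζ' ≠ 0 := by
    intro h; rw [h] at hvz'; simp at hvz'
  set ω := ζ * ζ'⁻¹ with hω
  have hωm : ω ^ m = 1 := by
    rw [hω, mul_pow, hz, inv_pow, hz', inv_one, one_mul]
  have hω1 : ω ≠ 1 := by
    intro h
    apply hne
    rw [hω, mul_inv_eq_one₀ hz'0] at h
    exact h
  have hvω : v ω = 1 := val_eq_one_of_pow v hm0 hωm
  have hS : (∑ i ∈ Finset.range m, ω ^ i) = 0 := by
    have h := geom_sum_mul ω m
    rw [hωm, sub_self] at h
    rcases mul_eq_zero.mp h with h | h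
    · exact h
    · exact absurd (sub_eq_zero.mp h) hω1
  have hkey : (∑ i ∈ Finset.range m, ∑ j ∈ Finset.range i, ω ^ j) * (ω - 1) = -(m : F) := by
    rw [Finset.sum_mul]
    rw [Finset.sum_congr rfl (fun i _ => geom_sum_mul ω i), Finset.sum_sub_distrib, hS,
      Finset.sum_const, Finset.card_range, zero_sub, nsmul_eq_mul, mul_one]
  have hG : v (∑ i ∈ Finset.range m, ∑ j ∈ Finset.range i, ω ^ j) ≤ 1 :=
    Valuation.map_sum_le v fun i _ => Valuation.map_sum_le v fun j _ => by
      rw [map_pow, hvω, one_pow]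
  have hprod : v (∑ i ∈ Finset.range m, ∑ j ∈ Finset.range i, ω ^ j) * v (ω - 1) = 1 := by
    rw [← map_mul, hkey, Valuation.map_neg, hm]
  have h1 : (1 : ℝ≥0) ≤ v (ω - 1) := by
    calc (1 : ℝ≥0) = _ * v (ω - 1) := hprod.symm
    _ ≤ 1 * v (ω - 1) := mul_le_mul_left hG _
    _ = v (ω - 1) := one_mul _
  have hfac : ζ - ζ' = ζ' * (ω - 1) := by
    rw [hω, mul_sub, mul_one, mul_comm ζ, ← mul_assoc, mul_inv_cancel₀ hz'0, one_mul]
  rw [hfac, map_mul, hvz', one_mul]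
  exact h1

lemma coeff_prod_bound (a : F) (R : Multiset F) :
    ∀ i : ℕ, v ((C a * (R.map fun r => X - C r).prod).coeff i) ≤
      v a * (R.map fun r => max 1 (v r)).prod := by
  induction R using Multiset.induction with
  | empty =>
    intro i
    simp only [Multiset.map_zero, Multiset.prod_zero, mul_one, coeff_C]
    split_ifs
    · exact le_refl _
    · simp
  | cons r R ih =>
    intro i
    rw [Multiset.map_cons, Multiset.prod_cons, Multiset.map_cons, Multiset.prod_cons]
    set Q := C a * (R.map fun r => X - C r).prod with hQ
    set B := v a * (R.map fun r => max 1 (v r)).prod with hB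
    have hrw : C a * ((X - C r) * (R.map fun r => X - C r).prod) = (X - C r) * Q := by
      rw [hQ]; ring
    rw [hrw]
    have hexp : (X - C r) * Q = X * Q - C r * Q := by ring
    rw [hexp]
    have hgoal : v a * (max 1 (v r) * (R.map fun r => max 1 (v r)).prod) = max 1 (v r) * B := by
      rw [hB]; ring
    rw [hgoal]
    cases i with
    | zero =>
      rw [coeff_sub, mul_coeff_zero, coeff_X_zero, zero_mul, zero_sub, Valuation.map_neg,
        coeff_C_mul, map_mul]
      calc v r * v (Q.coeff 0) ≤ v r * B := mul_le_mul_right (ih 0) _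
      _ ≤ max 1 (v r) * B := mul_le_mul_left (le_max_right _ _) _
    | succ n =>
      have hc : (C r * Q).coeff (n + 1) = r * Q.coeff (n + 1) := coeff_C_mul Q
      rw [coeff_sub, coeff_X_mul, hc]
      refine le_trans (v.map_sub _ _) (max_le ?_ ?_)
      · calc v (Q.coeff n) ≤ B := ih n
        _ = 1 * B := (one_mul _).symm
        _ ≤ max 1 (v r) * B := mul_le_mul_left (le_max_left _ _) _
      · rw [map_mul]
        calc v r * v (Q.coeff (n + 1)) ≤ v r * B := mul_le_mul_right (ih (n + 1)) _
        _ ≤ max 1 (v r) * B := mul_le_mul_left (le_max_right _ _) _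


lemma exists_eval_ge [IsAlgClosed F] (P : F[X]) (i₀ : ℕ)
    (h1 : ∀ i, v (P.coeff i) ≤ 1) (h2 : 1 ≤ v (P.coeff i₀)) :
    ∃ y : F, v y ≤ 1 ∧ 1 ≤ v (P.eval y) := by
  classical
  have hsplit := (IsAlgClosed.splits P).eq_prod_roots
  have hB : 1 ≤ v P.leadingCoeff * (P.roots.map fun r => max 1 (v r)).prod := by
    nth_rewrite 1 [hsplit] at h2
    exact le_trans h2 (coeff_prod_bound v _ _ i₀)
  -- choose m-th roots of unity
  obtain ⟨m, hmge, hm1⟩ := exists_nat_val_one v (P.roots.toFinset.card + 1)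
  have hm0 : m ≠ 0 := by rintro rfl; simp at hm1
  have hmF : ((m : ℕ) : F) ≠ 0 := by
    intro h; rw [h] at hm1; simp at hm1
  have hsep : (X ^ m - C (1 : F)).Separable := separable_X_pow_sub_C 1 hmF one_ne_zero
  set T := (nthRoots m (1 : F)).toFinset with hT
  have hTroot : ∀ ζ ∈ T, ζ ^ m = 1 := by
    intro ζ hζ
    rw [hT, Multiset.mem_toFinset, mem_nthRoots (Nat.pos_of_ne_zero hm0)] at hζ
    exact hζ
  have hTcard : T.card = m := by
    have hnd : (nthRoots m (1 : F)).Nodup := by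
      rw [nthRoots]; exact nodup_roots hsep
    rw [hT, Multiset.toFinset_card_of_nodup hnd, nthRoots,
      splits_iff_card_roots.mp (IsAlgClosed.splits (X ^ m - C (1 : F))),
      natDegree_X_pow_sub_C]
  -- pigeonhole:
  have hpick : ∃ ζ ∈ T, ∀ r ∈ P.roots.toFinset, 1 ≤ v (ζ - r) := by
    by_contra hcon
    push_neg at hcon
    have h' : ∀ ζ : F, ∃ r : F, ζ ∈ T → (r ∈ P.roots.toFinset ∧ v (ζ - r) < 1) := by
      intro ζ
      by_cases hζ : ζ ∈ T
      · obtain ⟨r, hr, hlt⟩ := hcon ζ hζ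
        exact ⟨r, fun _ => ⟨hr, hlt⟩⟩
      · exact ⟨0, fun hc => absurd hc hζ⟩
    choose rr hrr using h'
    have hmap : ∀ ζ ∈ T, rr ζ ∈ P.roots.toFinset := fun ζ hζ => (hrr ζ hζ).1
    have hcard : P.roots.toFinset.card < T.card := by
      rw [hTcard]; omega
    obtain ⟨ζ, hζ, ζ', hζ', hne, heq⟩ :=
      Finset.exists_ne_map_eq_of_card_lt_of_maps_to hcard hmap
    have hge := rootsOfUnity_sep v hm1 (hTroot ζ hζ) (hTroot ζ' hζ') hne
    have hlt : v (ζ - ζ') < 1 := by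
      have hdiff : ζ - ζ' = (ζ - rr ζ) - (ζ' - rr ζ') := by rw [heq]; ring
      rw [hdiff]
      exact lt_of_le_of_lt (v.map_sub _ _)
        (max_lt (hrr ζ hζ).2 (hrr ζ' hζ').2)
    exact absurd hge (not_le.mpr hlt)
  obtain ⟨ζ, hζT, hζ⟩ := hpick
  have hvζ : v ζ = 1 := val_eq_one_of_pow v hm0 (hTroot ζ hζT)
  refine ⟨ζ, le_of_eq hvζ, ?_⟩
  have hev : v (P.eval ζ) = v P.leadingCoeff * (P.roots.map fun r => v (ζ - r)).prod := by
    conv_lhs => rw [hsplit]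
    rw [eval_mul, eval_C, map_mul, eval_multiset_prod, Multiset.map_map, map_multiset_prod,
      Multiset.map_map]
    have hmc : Multiset.map (⇑v ∘ eval ζ ∘ fun a => X - C a) P.roots
        = Multiset.map (fun r => v (ζ - r)) P.roots :=
      Multiset.map_congr rfl (fun r _ => by simp [Function.comp_def])
    rw [hmc]
  have hker : ∀ r ∈ P.roots, max 1 (v r) ≤ v (ζ - r) := by
    intro r hr
    rcases le_or_gt (v r) 1 with hr1 | hr1
    · rw [max_eq_left hr1]
      exact hζ r (Multiset.mem_toFinset.mpr hr)
    · rw [max_eq_right hr1.le]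
      have hadd := v.map_add (r - ζ) ζ
      rw [sub_add_cancel] at hadd
      rcases le_max_iff.mp hadd with h | h
      · rw [Valuation.map_sub_swap]
        exact h
      · rw [hvζ] at h
        exact absurd hr1 (not_lt.mpr h)
  calc (1 : ℝ≥0) ≤ v P.leadingCoeff * (P.roots.map fun r => max 1 (v r)).prod := hB
  _ ≤ v P.leadingCoeff * (P.roots.map fun r => v (ζ - r)).prod :=
      mul_le_mul_right (Multiset.prod_map_le_prod_map _ _ hker) _
  _ = v (P.eval ζ) := hev.symm

end Stmt17Aux

open Stmt17Aux

/-- Let `F` be a model of `ℂ_p` (an algebraically closed valued field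
whose value group is `p^ℚ`), `(α, δ) ∈ F × (ℚ ∪ {∞})` (multiplicatively: `d ∈ ℝ≥0`
with `d = 0` for `δ = ∞`), and let `O_{p,α,δ}` be the valuation ring on `F(X)` of the
monomial valuation `v_{p,α,δ}` with maximal ideal `M_{p,α,δ}`.  Then
`M_{p,α,δ} ∩ (O_{p,α,δ} ∩ F[X]) = Int(B̄(α,δ), M_p)`: a polynomial `f` satisfies
`monVal v α d f < 1` iff `f` maps the ball `B̄(α,δ) = {x : v(x-α) ≤ d}` into the
maximal ideal `M_p = {v < 1}` of `O_p`. -/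
theorem stmt_17 (p : ℕ) (hp : p.Prime) {F : Type*} [Field F] [IsAlgClosed F]
    (v : Valuation F ℝ≥0)
    (hval : ∀ x : F, x ≠ 0 → ∃ q : ℚ, v x = (p : ℝ≥0) ^ (q : ℝ))
    (hsurj : ∀ q : ℚ, ∃ x : F, v x = (p : ℝ≥0) ^ (q : ℝ))
    (α : F) (d : ℝ≥0)
    (hd : d = 0 ∨ ∃ (m : ℤ) (n : ℕ), 0 < n ∧ d ^ n = (p : ℝ≥0) ^ m) :
    ∀ f : Polynomial F,
      monVal v α d f < 1 ↔ ∀ x : F, v (x - α) ≤ d → v (Polynomial.eval x f) < 1 := by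
  intro f
  classical
  set g := f.comp (X + C α) with hg
  have hgeval : ∀ z : F, g.eval z = f.eval (z + α) := by
    intro z; rw [hg, eval_comp]; simp
  have hmon : monVal v α d f = g.support.sup (fun i => v (g.coeff i) * d ^ i) := rfl
  rw [hmon]
  constructor
  · intro hM x hx
    have hfx : f.eval x = g.eval (x - α) := by rw [hgeval, sub_add_cancel]
    rw [show Polynomial.eval x f = f.eval x from rfl, hfx, eval_eq_sum, sum_def]
    refine lt_of_le_of_lt (Valuation.map_sum_le v ?_) hM
    intro i hi
    calc v (g.coeff i * (x - α) ^ i) = v (g.coeff i) * v (x - α) ^ i := by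
          rw [map_mul, map_pow]
    _ ≤ v (g.coeff i) * d ^ i := mul_le_mul_right (pow_le_pow_left₀ zero_le hx i) _
    _ ≤ _ := Finset.le_sup (f := fun i => v (g.coeff i) * d ^ i) hi
  · intro H
    by_contra hM
    have hM1 : (1 : ℝ≥0) ≤ g.support.sup (fun i => v (g.coeff i) * d ^ i) := not_lt.mp hM
    set M := g.support.sup (fun i => v (g.coeff i) * d ^ i) with hMdef
    have hsupp : g.support.Nonempty := by
      rcases Finset.eq_empty_or_nonempty g.support with h | h
      · rw [hMdef, h, Finset.sup_empty] at hM1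
        exact absurd hM1 (by norm_num)
      · exact h
    obtain ⟨i₀, hi₀, hMi⟩ := Finset.exists_mem_eq_sup _ hsupp (fun i => v (g.coeff i) * d ^ i)
    have hMi' : M = v (g.coeff i₀) * d ^ i₀ := hMdef.trans hMi
    rcases hd with rfl | ⟨mz, n, hn, hdn⟩
    · -- d = 0 : the ball is {α}
      rcases Nat.eq_zero_or_pos i₀ with rfl | hipos
      · have hfa : v (f.eval α) < 1 := H α (by simp)
        have hc : g.coeff 0 = f.eval α := by
          rw [coeff_zero_eq_eval_zero, hgeval, zero_add]
        rw [hMi', hc, pow_zero, mul_one] at hM1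
        exact absurd hfa (not_lt.mpr hM1)
      · rw [hMi', zero_pow hipos.ne', mul_zero] at hM1
        exact absurd hM1 (by norm_num)
    · -- d > 0
      have hp0 : (p : ℝ≥0) ≠ 0 := Nat.cast_ne_zero.mpr hp.pos.ne'
      have hd0 : d ≠ 0 := by
        intro h
        rw [h, zero_pow hn.ne'] at hdn
        exact (zpow_ne_zero mz hp0) hdn.symm
      -- an element t with v t = d
      obtain ⟨t, ht⟩ := hsurj ((mz : ℚ) / (n : ℚ))
      have htd : v t = d := by
        refine (pow_left_inj₀ zero_le zero_le hn.ne').mp ?_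
        rw [ht, hdn, ← NNReal.rpow_natCast ((p : ℝ≥0) ^ (((mz : ℚ) / (n : ℚ) : ℚ) : ℝ)) n,
          ← NNReal.rpow_mul, ← NNReal.rpow_intCast (p : ℝ≥0) mz]
        congr 1
        push_cast
        field_simp
      have hM0 : M ≠ 0 := (lt_of_lt_of_le zero_lt_one hM1).ne'
      have hva : v (g.coeff i₀ * t ^ i₀) = M := by
        rw [map_mul, map_pow, htd]
        exact hMi'.symm
      have ha0 : g.coeff i₀ * t ^ i₀ ≠ 0 := by
        intro h
        rw [h, map_zero] at hva
        exact hM0 hva.symm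
      obtain ⟨q, hq⟩ := hval _ ha0
      obtain ⟨c, hc⟩ := hsurj (-q)
      have hvc : v c = M⁻¹ := by
        rw [hc, ← hva, hq]
        push_cast
        rw [NNReal.rpow_neg]
      set Q : F[X] := ∑ i ∈ g.support, (monomial i (c * (g.coeff i * t ^ i))) with hQdef
      have hQcoeff : ∀ j, Q.coeff j = c * (g.coeff j * t ^ j) := by
        intro j
        rw [hQdef, finset_sum_coeff]
        simp only [coeff_monomial]
        rw [Finset.sum_ite_eq' g.support j]
        split_ifs with h
        · rfl
        · rw [notMem_support_iff.mp h]
          ring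
      have hbound : ∀ j, v (g.coeff j) * d ^ j ≤ M := by
        intro j
        by_cases hj : j ∈ g.support
        · exact Finset.le_sup (f := fun i => v (g.coeff i) * d ^ i) hj
        · rw [notMem_support_iff.mp hj, map_zero, zero_mul]
          exact zero_le
      have h1 : ∀ j, v (Q.coeff j) ≤ 1 := by
        intro j
        rw [hQcoeff, map_mul, hvc, map_mul, map_pow, htd]
        calc M⁻¹ * (v (g.coeff j) * d ^ j) ≤ M⁻¹ * M := mul_le_mul_right (hbound j) _
        _ = 1 := inv_mul_cancel₀ hM0
      have h2 : (1 : ℝ≥0) ≤ v (Q.coeff i₀) := by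
        rw [hQcoeff, map_mul, hvc, hva, inv_mul_cancel₀ hM0]
      obtain ⟨y, hy1, hy2⟩ := exists_eval_ge v Q i₀ h1 h2
      have hQeval : Q.eval y = c * g.eval (t * y) := by
        rw [hQdef, eval_finset_sum]
        simp only [eval_monomial]
        rw [eval_eq_sum, sum_def, Finset.mul_sum]
        apply Finset.sum_congr rfl
        intro i _
        ring
      set x := t * y + α with hx
      have hxα : v (x - α) ≤ d := by
        rw [hx, add_sub_cancel_right, map_mul, htd]
        calc d * v y ≤ d * 1 := mul_le_mul_right hy1 _
        _ = d := mul_one _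
      have hflt : v (f.eval x) < 1 := H x hxα
      have hfx : f.eval x = g.eval (t * y) := by rw [hgeval]
      have hge : (1 : ℝ≥0) ≤ v (f.eval x) := by
        rw [hfx]
        have : (1 : ℝ≥0) ≤ M⁻¹ * v (g.eval (t * y)) := by
          rw [← hvc, ← map_mul, ← hQeval]; exact hy2
        calc (1 : ℝ≥0) ≤ M := hM1
        _ = M * 1 := (mul_one M).symm
        _ ≤ M * (M⁻¹ * v (g.eval (t * y))) := mul_le_mul_right this _
        _ = v (g.eval (t * y)) := by
              rw [← mul_assoc, mul_inv_cancel₀ hM0, one_mul]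
      exact absurd hflt (not_lt.mpr hge)
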